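/- Let m ≥ 1 be an integer and let (b,d) ∈ S_m. Then the denominator m/(2+m) − ((2+m)/m) d − (2m/(2+m)) b + (4(1+m)/(m(2+m)))(2 b^{−m/2} − 1) d^{1+m/2} + 2 t₀(b,m) appearing in W(b,d,m) is positive and equals ∫₀^∞ |f_{b,d,m}(t)| dt, and the Lebesgue measure of {t ∈ [0,∞) : |Λ_m f_{b,d,m}(t)| ≥ 1} is at least d − 1; consequently |{t ∈ [0,∞) : |Λ_m f_{b,d,m}(t)| ≥ 1}| ≥ W(b,d,m) · ∫₀^∞ |f_{b,d,m}(t)| dt. -/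

import Mathlib

open MeasureTheory Real Set

/-- The operator `Λ_m`. -/
noncomputable def Lam (m : ℕ) (f : ℝ → ℝ) (t : ℝ) : ℝ :=
  ((1 + (m : ℝ)) / t ^ (1 + (m : ℝ) / 2)) * (∫ s in (0:ℝ)..t, f s * s ^ ((m : ℝ) / 2)) - f t

/-- The coefficient `D(b,m) = (2(1+m)/m)(2 b^{-m/2} - 1)`. -/
noncomputable def Dcoef (m : ℕ) (b : ℝ) : ℝ :=
  (2 * (1 + (m : ℝ)) / (m : ℝ)) * (2 * b ^ (-(m : ℝ) / 2) - 1)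

/-- The parameter set `S_m`. -/
def Sset (m : ℕ) : Set (ℝ × ℝ) :=
  {p : ℝ × ℝ | 1 < p.1 ∧ p.1 < p.2 ∧ 0 < Dcoef m p.1 ∧
    -(2 + (m : ℝ)) / (m : ℝ) + Dcoef m p.1 * p.1 ^ ((m : ℝ) / 2) < 0 ∧
    0 < -(2 + (m : ℝ)) / (m : ℝ) + Dcoef m p.1 * p.2 ^ ((m : ℝ) / 2) ∧
    -(2 + (m : ℝ)) / (m : ℝ) + Dcoef m p.1 * p.2 ^ ((m : ℝ) / 2) < 2}

/-- The function `f_{b,d,m}` from the class `F^sp_m`. -/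
noncomputable def fsp (m : ℕ) (b d t : ℝ) : ℝ :=
  if 1 < t ∧ t ≤ b then (2 + (m : ℝ)) / (m : ℝ) - (2 * (1 + (m : ℝ)) / (m : ℝ)) * t ^ ((m : ℝ) / 2)
  else if b < t ∧ t ≤ d then -(2 + (m : ℝ)) / (m : ℝ) + Dcoef m b * t ^ ((m : ℝ) / 2)
  else 0

/-- `t₀(b,m)`. -/
noncomputable def t0 (m : ℕ) (b : ℝ) : ℝ :=
  ((2 + (m : ℝ)) / (2 * (1 + (m : ℝ)))) ^ (2 / (m : ℝ)) *
    (2 * b ^ (-(m : ℝ) / 2) - 1) ^ (-(2 / (m : ℝ)))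

/-- The denominator of `W(b,d,m)`. -/
noncomputable def denom (m : ℕ) (b d : ℝ) : ℝ :=
  (m : ℝ) / (2 + (m : ℝ)) - ((2 + (m : ℝ)) / (m : ℝ)) * d - (2 * (m : ℝ) / (2 + (m : ℝ))) * b
    + (4 * (1 + (m : ℝ)) / ((m : ℝ) * (2 + (m : ℝ)))) * (2 * b ^ (-(m : ℝ) / 2) - 1)
      * d ^ (1 + (m : ℝ) / 2)
    + 2 * t0 m b

/-- `W(b,d,m)`. -/
noncomputable def Wf (m : ℕ) (b d : ℝ) : ℝ := (d - 1) / denom m b d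

/-- The weak-type ratio of `f_{b,d,m}` under `Λ_m`. -/
noncomputable def ratio (m : ℕ) (b d : ℝ) : ℝ :=
  (MeasureTheory.volume {t : ℝ | 0 ≤ t ∧ 1 ≤ |Lam m (fsp m b d) t|}).toReal /
    ∫ t in Set.Ici (0 : ℝ), |fsp m b d t|

/-- The restricted weak-type constant of `Λ_m` over the class `F^sp_m`. -/
noncomputable def Rsp (m : ℕ) : ℝ :=
  sSup {r : ℝ | ∃ b d : ℝ, (b, d) ∈ Sset m ∧ r = ratio m b d}

section Stmt4Aux
open intervalIntegral
open scoped Interval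


private lemma II_congr {f g : ℝ → ℝ} {u v : ℝ} (hg : IntervalIntegrable g volume u v)
    (h : ∀ x ∈ Ι u v, f x = g x) : IntervalIntegrable f volume u v := by
  rw [intervalIntegrable_iff] at hg ⊢
  exact hg.congr_fun (fun x hx => (h x hx).symm) measurableSet_uIoc

private lemma II_lin (c P Q u v : ℝ) (hc : 0 ≤ c) :
    IntervalIntegrable (fun s => P + Q * s ^ (c/2)) volume u v :=
  intervalIntegrable_const.add ((intervalIntegrable_rpow (Or.inl (by positivity))).const_mul Q)

private lemma integ1 (c P Q u v : ℝ) (hc : 0 ≤ c) :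
    ∫ s in u..v, (P + Q * s ^ (c/2)) =
      P * (v - u) + Q * ((v ^ (c/2+1) - u ^ (c/2+1)) / (c/2+1)) := by
  rw [integral_add intervalIntegrable_const
      ((intervalIntegrable_rpow (Or.inl (by positivity))).const_mul Q),
    intervalIntegral.integral_const, intervalIntegral.integral_const_mul,
    integral_rpow (Or.inl (by linarith : (-1:ℝ) < c/2))]
  simp [smul_eq_mul]; ring

private lemma rpow_split {s c : ℝ} (hs : 0 < s) : s ^ (c/2) * s ^ (c/2) = s ^ c := by
  rw [← Real.rpow_add hs, add_halves]

private lemma II_lin2 (c P Q u v : ℝ) (hc : 0 ≤ c) (hu : 0 < u) (huv : u ≤ v) :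
    IntervalIntegrable (fun s => (P + Q * s ^ (c/2)) * s ^ (c/2)) volume u v := by
  apply II_congr (g := fun s => P * s ^ (c/2) + Q * s ^ c)
  · exact ((intervalIntegrable_rpow (Or.inl (by positivity))).const_mul P).add
      ((intervalIntegrable_rpow (Or.inl hc)).const_mul Q)
  · intro s hs
    rw [Set.uIoc_of_le huv] at hs
    have hs0 : 0 < s := hu.trans hs.1
    rw [show s ^ c = s ^ (c/2) * s ^ (c/2) from (rpow_split hs0).symm]
    generalize s ^ (c/2) = X
    ring

private lemma integ2 (c P Q u v : ℝ) (hc : 0 ≤ c) (hu : 0 < u) (huv : u ≤ v) :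
    ∫ s in u..v, (P + Q * s ^ (c/2)) * s ^ (c/2) =
      P * ((v ^ (c/2+1) - u ^ (c/2+1)) / (c/2+1)) + Q * ((v ^ (c+1) - u ^ (c+1)) / (c+1)) := by
  rw [intervalIntegral.integral_congr (g := fun s => P * s ^ (c/2) + Q * s ^ c) ?_]
  · rw [integral_add ((intervalIntegrable_rpow (Or.inl (by positivity))).const_mul P)
        ((intervalIntegrable_rpow (Or.inl hc)).const_mul Q),
      intervalIntegral.integral_const_mul, intervalIntegral.integral_const_mul,
      integral_rpow (Or.inl (by linarith : (-1:ℝ) < c/2)),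
      integral_rpow (Or.inl (by linarith : (-1:ℝ) < c))]
  · intro s hs
    rw [Set.uIcc_of_le huv] at hs
    have hs0 : 0 < s := lt_of_lt_of_le hu hs.1
    show (P + Q * s ^ (c/2)) * s ^ (c/2) = P * s ^ (c/2) + Q * s ^ c
    rw [show s ^ c = s ^ (c/2) * s ^ (c/2) from (rpow_split hs0).symm]
    generalize s ^ (c/2) = X
    ring

private lemma fsp_of_le_one {m : ℕ} {b d t : ℝ} (hb : 1 ≤ b) (ht : t ≤ 1) : fsp m b d t = 0 := by
  have h1 : ¬(1 < t ∧ t ≤ b) := fun hx => absurd hx.1 (not_lt.2 ht)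
  have h2 : ¬(b < t ∧ t ≤ d) := fun hx => by linarith [hx.1]
  simp only [fsp, if_neg h1, if_neg h2]

private lemma fsp_of_gt {m : ℕ} {b d t : ℝ} (hbd : b ≤ d) (ht : d < t) : fsp m b d t = 0 := by
  have h1 : ¬(1 < t ∧ t ≤ b) := fun hx => by linarith [hx.2]
  have h2 : ¬(b < t ∧ t ≤ d) := fun hx => by linarith [hx.2]
  simp only [fsp, if_neg h1, if_neg h2]

private lemma fsp_br1 {m : ℕ} {b d t : ℝ} (ht1 : 1 < t) (htb : t ≤ b) :
    fsp m b d t = (2 + (m:ℝ)) / (m:ℝ) + (-(2 * (1 + (m:ℝ)) / (m:ℝ))) * t ^ ((m:ℝ)/2) := by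
  simp only [fsp, if_pos (And.intro ht1 htb)]; ring

private lemma fsp_br2 {m : ℕ} {b d t : ℝ} (htb : b < t) (htd : t ≤ d) :
    fsp m b d t = -(2 + (m:ℝ)) / (m:ℝ) + Dcoef m b * t ^ ((m:ℝ)/2) := by
  have h1 : ¬(1 < t ∧ t ≤ b) := fun hx => absurd hx.2 (not_le.2 htb)
  simp only [fsp, if_neg h1, if_pos (And.intro htb htd)]
private lemma int_zero_one {m : ℕ} {b d : ℝ} (hb : 1 ≤ b) :
    (∀ x ∈ Ι (0:ℝ) 1, fsp m b d x * x ^ ((m:ℝ)/2) = 0) := by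
  intro x hx
  rw [Set.uIoc_of_le (by norm_num : (0:ℝ) ≤ 1)] at hx
  rw [fsp_of_le_one hb hx.2, zero_mul]

private lemma lam_one {m : ℕ} (hm : 1 ≤ m) {b d : ℝ} (hb : 1 < b) {t : ℝ}
    (ht1 : 1 < t) (htb : t ≤ b) : Lam m (fsp m b d) t = 1 := by
  have hc : (1:ℝ) ≤ (m:ℝ) := by exact_mod_cast hm
  set c := (m:ℝ) with hcdef
  have hc0 : (0:ℝ) < c := by linarith
  have ht0 : (0:ℝ) < t := by linarith
  have hII01 : IntervalIntegrable (fun s => fsp m b d s * s ^ (c/2)) volume 0 1 :=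
    II_congr (_root_.intervalIntegrable_const (c := (0:ℝ))) (int_zero_one hb.le)
  have hI01 : ∫ s in (0:ℝ)..1, fsp m b d s * s ^ (c/2) = 0 := by
    rw [integral_congr_ae (g := fun _ => (0:ℝ)) (Filter.Eventually.of_forall (int_zero_one hb.le))]
    simp
  have h1t : ∀ x ∈ Ι (1:ℝ) t, fsp m b d x * x ^ (c/2)
      = ((2+c)/c + (-(2*(1+c)/c)) * x ^ (c/2)) * x ^ (c/2) := by
    intro x hx
    rw [Set.uIoc_of_le ht1.le] at hx
    rw [fsp_br1 hx.1 (hx.2.trans htb)]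
  have hII1t : IntervalIntegrable (fun s => fsp m b d s * s ^ (c/2)) volume 1 t :=
    II_congr (II_lin2 c ((2+c)/c) (-(2*(1+c)/c)) 1 t hc0.le one_pos ht1.le) h1t
  have hsplit : ∫ s in (0:ℝ)..t, fsp m b d s * s ^ (c/2)
      = (2+c)/c * ((t^(c/2+1) - 1)/(c/2+1)) + (-(2*(1+c)/c)) * ((t^(c+1) - 1)/(c+1)) := by
    rw [← integral_add_adjacent_intervals hII01 hII1t, hI01, zero_add,
      integral_congr_ae (Filter.Eventually.of_forall h1t),
      integ2 c _ _ 1 t hc0.le one_pos ht1.le]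
    simp [Real.one_rpow]
  have hX : (0:ℝ) < t ^ (c/2) := Real.rpow_pos_of_pos ht0 _
  have htc : t ^ (c+1) = t ^ (c/2) * t ^ (c/2) * t := by
    rw [Real.rpow_add ht0, Real.rpow_one, ← rpow_split ht0]
  have htp : t ^ (c/2+1) = t ^ (c/2) * t := by rw [Real.rpow_add ht0, Real.rpow_one]
  have htp' : t ^ (1+c/2) = t * t ^ (c/2) := by rw [Real.rpow_add ht0, Real.rpow_one]
  simp only [Lam, ← hcdef]
  rw [hsplit, fsp_br1 ht1 htb, htp', htp, htc]
  generalize t ^ (c/2) = X at hX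
  have h1 : c + 1 ≠ 0 := by linarith
  have h2 : c/2 + 1 ≠ 0 := by linarith
  have ht' : t ≠ 0 := ne_of_gt ht0
  have hX' : X ≠ 0 := ne_of_gt hX
  have hc' : c ≠ 0 := ne_of_gt hc0
  field_simp
  ring
private lemma lam_neg {m : ℕ} (hm : 1 ≤ m) {b d : ℝ} (hb : 1 < b) (hbd : b < d) {t : ℝ}
    (htb : b < t) (htd : t ≤ d) : Lam m (fsp m b d) t = -1 := by
  have hc : (1:ℝ) ≤ (m:ℝ) := by exact_mod_cast hm
  set c := (m:ℝ) with hcdef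
  have hc0 : (0:ℝ) < c := by linarith
  have hb0 : (0:ℝ) < b := by linarith
  have ht0 : (0:ℝ) < t := by linarith
  have hII01 : IntervalIntegrable (fun s => fsp m b d s * s ^ (c/2)) volume 0 1 :=
    II_congr (_root_.intervalIntegrable_const (c := (0:ℝ))) (int_zero_one hb.le)
  have hI01 : ∫ s in (0:ℝ)..1, fsp m b d s * s ^ (c/2) = 0 := by
    rw [integral_congr_ae (g := fun _ => (0:ℝ)) (Filter.Eventually.of_forall (int_zero_one hb.le))]
    simp
  have h1b : ∀ x ∈ Ι (1:ℝ) b, fsp m b d x * x ^ (c/2)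
      = ((2+c)/c + (-(2*(1+c)/c)) * x ^ (c/2)) * x ^ (c/2) := by
    intro x hx
    rw [Set.uIoc_of_le hb.le] at hx
    rw [fsp_br1 hx.1 hx.2]
  have hII1b : IntervalIntegrable (fun s => fsp m b d s * s ^ (c/2)) volume 1 b :=
    II_congr (II_lin2 c ((2+c)/c) (-(2*(1+c)/c)) 1 b hc0.le one_pos hb.le) h1b
  have hbt : ∀ x ∈ Ι b t, fsp m b d x * x ^ (c/2)
      = ((-(2+c)/c) + Dcoef m b * x ^ (c/2)) * x ^ (c/2) := by
    intro x hx
    rw [Set.uIoc_of_le htb.le] at hx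
    rw [fsp_br2 hx.1 (hx.2.trans htd)]
  have hIIbt : IntervalIntegrable (fun s => fsp m b d s * s ^ (c/2)) volume b t :=
    II_congr (II_lin2 c (-(2+c)/c) (Dcoef m b) b t hc0.le hb0 htb.le) hbt
  have hsplit : ∫ s in (0:ℝ)..t, fsp m b d s * s ^ (c/2)
      = ((2+c)/c * ((b^(c/2+1) - 1)/(c/2+1)) + (-(2*(1+c)/c)) * ((b^(c+1) - 1)/(c+1)))
        + ((-(2+c)/c) * ((t^(c/2+1) - b^(c/2+1))/(c/2+1)) + Dcoef m b * ((t^(c+1) - b^(c+1))/(c+1))) := by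
    rw [← integral_add_adjacent_intervals (hII01.trans hII1b) hIIbt,
      ← integral_add_adjacent_intervals hII01 hII1b, hI01, zero_add,
      integral_congr_ae (Filter.Eventually.of_forall h1b),
      integ2 c _ _ 1 b hc0.le one_pos hb.le,
      integral_congr_ae (Filter.Eventually.of_forall hbt),
      integ2 c _ _ b t hc0.le hb0 htb.le]
    simp [Real.one_rpow]
  have hX : (0:ℝ) < t ^ (c/2) := Real.rpow_pos_of_pos ht0 _
  have hY : (0:ℝ) < b ^ (c/2) := Real.rpow_pos_of_pos hb0 _
  have hDY : Dcoef m b = 2*(1+c)/c * (2*(b ^ (c/2))⁻¹ - 1) := by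
    rw [Dcoef, ← hcdef, neg_div, Real.rpow_neg hb0.le]
  have htc : t ^ (c+1) = t ^ (c/2) * t ^ (c/2) * t := by
    rw [Real.rpow_add ht0, Real.rpow_one, ← rpow_split ht0]
  have htp : t ^ (c/2+1) = t ^ (c/2) * t := by rw [Real.rpow_add ht0, Real.rpow_one]
  have htp' : t ^ (1+c/2) = t * t ^ (c/2) := by rw [Real.rpow_add ht0, Real.rpow_one]
  have hbc : b ^ (c+1) = b ^ (c/2) * b ^ (c/2) * b := by
    rw [Real.rpow_add hb0, Real.rpow_one, ← rpow_split hb0]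
  have hbp : b ^ (c/2+1) = b ^ (c/2) * b := by rw [Real.rpow_add hb0, Real.rpow_one]
  simp only [Lam, ← hcdef]
  rw [hsplit, fsp_br2 htb htd, hDY, htp', htp, htc, hbp, hbc]
  generalize t ^ (c/2) = X at hX
  generalize b ^ (c/2) = Y at hY
  have h1 : c + 1 ≠ 0 := by linarith
  have h2 : c/2 + 1 ≠ 0 := by linarith
  have ht' : t ≠ 0 := ne_of_gt ht0
  have hX' : X ≠ 0 := ne_of_gt hX
  have hY' : Y ≠ 0 := ne_of_gt hY
  have hc' : c ≠ 0 := ne_of_gt hc0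
  field_simp
  ring
private lemma t0_pow {m : ℕ} (hm : 1 ≤ m) {b : ℝ} (hb : 0 < b)
    (hB : 0 < 2 * b ^ (-(m:ℝ)/2) - 1) :
    0 < t0 m b ∧ (t0 m b) ^ ((m:ℝ)/2)
      = (2+(m:ℝ))/(2*(1+(m:ℝ))) * (2 * b ^ (-(m:ℝ)/2) - 1)⁻¹ := by
  have hA : 0 < (2+(m:ℝ))/(2*(1+(m:ℝ))) := by positivity
  have hcne : (m:ℝ) ≠ 0 := Nat.cast_ne_zero.mpr (by omega)
  refine ⟨mul_pos (Real.rpow_pos_of_pos hA _) (Real.rpow_pos_of_pos hB _), ?_⟩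
  rw [t0, Real.mul_rpow (Real.rpow_nonneg hA.le _) (Real.rpow_nonneg hB.le _),
    ← Real.rpow_mul hA.le, ← Real.rpow_mul hB.le,
    show 2/(m:ℝ) * ((m:ℝ)/2) = 1 by field_simp,
    show -(2/(m:ℝ)) * ((m:ℝ)/2) = -1 by field_simp,
    Real.rpow_one, Real.rpow_neg_one]
set_option maxHeartbeats 1000000 in
private lemma denom_eq {m : ℕ} (hm : 1 ≤ m) {b d : ℝ} (hb : 1 < b) (hbd : b < d)
    (hD : 0 < Dcoef m b)
    (hfb : -(2+(m:ℝ))/(m:ℝ) + Dcoef m b * b ^ ((m:ℝ)/2) < 0)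
    (hfd0 : 0 < -(2+(m:ℝ))/(m:ℝ) + Dcoef m b * d ^ ((m:ℝ)/2)) :
    0 < denom m b d ∧ denom m b d = ∫ t in Set.Ici (0:ℝ), |fsp m b d t| := by
  have hc : (1:ℝ) ≤ (m:ℝ) := by exact_mod_cast hm
  set c := (m:ℝ) with hcdef
  have hc0 : (0:ℝ) < c := by linarith
  have hb0 : (0:ℝ) < b := by linarith
  have hd0 : (0:ℝ) < d := by linarith
  have hY : (0:ℝ) < b ^ (c/2) := Real.rpow_pos_of_pos hb0 _
  have hbY : b ^ (-c/2) = (b ^ (c/2))⁻¹ := by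
    rw [neg_div, Real.rpow_neg hb0.le]
  have hDY0 : Dcoef m b = 2*(1+c)/c * (2*(b ^ (c/2))⁻¹ - 1) := by
    rw [Dcoef, ← hcdef, hbY]
  have hk : (0:ℝ) < 2*(1+c)/c := by positivity
  have hB : 0 < 2 * b ^ (-c/2) - 1 := by
    by_contra hle
    push_neg at hle
    rw [hbY] at hle
    have : 2*(1+c)/c * (2*(b ^ (c/2))⁻¹ - 1) ≤ 0 := mul_nonpos_of_nonneg_of_nonpos hk.le hle
    rw [← hDY0] at this; linarith
  obtain ⟨ht0pos, hTY0⟩ := t0_pow hm hb0 hB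
  rw [← hcdef] at hTY0
  rw [hbY] at hTY0 hB
  have h1c : (1:ℝ) + c ≠ 0 := by linarith
  have hY2 : b ^ (c/2) < 2 := by
    have e : b ^ (c/2) * (2*(b ^ (c/2))⁻¹ - 1) = 2 - b ^ (c/2) := by
      field_simp
    nlinarith [mul_pos hY hB]
  have h2Y : (2:ℝ) - b ^ (c/2) ≠ 0 := by linarith
  have hBY : 2*(b ^ (c/2))⁻¹ - 1 = (2 - b ^ (c/2)) / (b ^ (c/2)) := by
    field_simp
  have hDY : Dcoef m b = 2*(1+c)/c * ((2 - b ^ (c/2)) / (b ^ (c/2))) := by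
    rw [hDY0, hBY]
  have hTY : (t0 m b) ^ (c/2) = (2+c)/(2*(1+c)) * (b ^ (c/2) / (2 - b ^ (c/2))) := by
    rw [hTY0, hBY, inv_div]
  have hDT : Dcoef m b * (t0 m b) ^ (c/2) = (2+c)/c := by
    rw [hDY, hTY]
    field_simp
  have hnd : -(2+c)/c = -((2+c)/c) := neg_div _ _
  rw [hnd] at hfb hfd0
  have hbt0 : b < t0 m b := by
    by_contra hle
    push_neg at hle
    have h1 : (t0 m b)^(c/2) ≤ b^(c/2) := Real.rpow_le_rpow ht0pos.le hle (by positivity)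
    have h2 : Dcoef m b * (t0 m b)^(c/2) ≤ Dcoef m b * b^(c/2) :=
      mul_le_mul_of_nonneg_left h1 hD.le
    rw [hDT] at h2
    linarith
  have ht0d : t0 m b < d := by
    by_contra hle
    push_neg at hle
    have h1 : d^(c/2) ≤ (t0 m b)^(c/2) := Real.rpow_le_rpow hd0.le hle (by positivity)
    have h2 : Dcoef m b * d^(c/2) ≤ Dcoef m b * (t0 m b)^(c/2) :=
      mul_le_mul_of_nonneg_left h1 hD.le
    rw [hDT] at h2
    linarith
  -- branch descriptions of |fsp|
  have habs1 : ∀ x ∈ Ι (1:ℝ) b, |fsp m b d x| = (-((2+c)/c)) + (2*(1+c)/c) * x ^ (c/2) := by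
    intro x hx
    rw [Set.uIoc_of_le hb.le] at hx
    rw [fsp_br1 hx.1 hx.2, ← hcdef]
    have hX1 : (1:ℝ) ≤ x ^ (c/2) := Real.one_le_rpow hx.1.le (by positivity)
    have hmono : 2*(1+c)/c * 1 ≤ 2*(1+c)/c * x ^ (c/2) := mul_le_mul_of_nonneg_left hX1 hk.le
    have hcmp : (2+c)/c ≤ 2*(1+c)/c := (div_le_div_iff_of_pos_right hc0).mpr (by linarith)
    have hnp : (2+c)/c + (-(2*(1+c)/c)) * x ^ (c/2) ≤ 0 := by nlinarith
    rw [abs_of_nonpos hnp]; ring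
  have habs2 : ∀ x ∈ Ι b (t0 m b), |fsp m b d x| = (2+c)/c + (-(Dcoef m b)) * x ^ (c/2) := by
    intro x hx
    rw [Set.uIoc_of_le hbt0.le] at hx
    rw [fsp_br2 hx.1 (hx.2.trans ht0d.le), ← hcdef, hnd]
    have hx0 : (0:ℝ) ≤ x := by linarith [hx.1]
    have h1 : x^(c/2) ≤ (t0 m b)^(c/2) := Real.rpow_le_rpow hx0 hx.2 (by positivity)
    have h2 : Dcoef m b * x^(c/2) ≤ Dcoef m b * (t0 m b)^(c/2) :=
      mul_le_mul_of_nonneg_left h1 hD.le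
    rw [hDT] at h2
    have hnp : -((2+c)/c) + Dcoef m b * x ^ (c/2) ≤ 0 := by linarith
    rw [abs_of_nonpos hnp]; ring
  have habs3 : ∀ x ∈ Ι (t0 m b) d, |fsp m b d x| = (-((2+c)/c)) + (Dcoef m b) * x ^ (c/2) := by
    intro x hx
    rw [Set.uIoc_of_le ht0d.le] at hx
    rw [fsp_br2 (hbt0.trans hx.1) hx.2, ← hcdef, hnd]
    have h1 : (t0 m b)^(c/2) ≤ x^(c/2) := Real.rpow_le_rpow ht0pos.le hx.1.le (by positivity)
    have h2 : Dcoef m b * (t0 m b)^(c/2) ≤ Dcoef m b * x^(c/2) :=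
      mul_le_mul_of_nonneg_left h1 hD.le
    rw [hDT] at h2
    have hnn : 0 ≤ -((2+c)/c) + Dcoef m b * x ^ (c/2) := by linarith
    rw [abs_of_nonneg hnn]
  -- integrability
  have II1 : IntervalIntegrable (fun x => |fsp m b d x|) volume 1 b :=
    II_congr (II_lin c (-((2+c)/c)) (2*(1+c)/c) 1 b hc0.le) habs1
  have II2 : IntervalIntegrable (fun x => |fsp m b d x|) volume b (t0 m b) :=
    II_congr (II_lin c ((2+c)/c) (-(Dcoef m b)) b (t0 m b) hc0.le) habs2
  have II3 : IntervalIntegrable (fun x => |fsp m b d x|) volume (t0 m b) d :=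
    II_congr (II_lin c (-((2+c)/c)) (Dcoef m b) (t0 m b) d hc0.le) habs3
  -- reduce set integral to interval integrals
  have hIci : ∫ t in Set.Ici (0:ℝ), |fsp m b d t|
      = (∫ x in (1:ℝ)..b, |fsp m b d x|) + (∫ x in b..(t0 m b), |fsp m b d x|)
        + (∫ x in (t0 m b)..d, |fsp m b d x|) := by
    rw [MeasureTheory.setIntegral_eq_of_subset_of_forall_diff_eq_zero measurableSet_Ici
        (fun x (hx : x ∈ Set.Ioc 1 d) => le_of_lt (lt_trans one_pos hx.1))
        (fun x hx => ?_), ← intervalIntegral.integral_of_le (by linarith : (1:ℝ) ≤ d),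
      ← integral_add_adjacent_intervals (II1.trans II2) II3,
      ← integral_add_adjacent_intervals II1 II2]
    obtain ⟨-, hx2⟩ := hx
    rcases le_or_gt x 1 with h1 | h1
    · rw [fsp_of_le_one hb.le h1, abs_zero]
    · have hdx : d < x := by
        by_contra hxd
        exact hx2 ⟨h1, not_lt.1 hxd⟩
      rw [fsp_of_gt hbd.le hdx, abs_zero]
  -- values
  have hone : (1:ℝ) ^ (c/2+1) = 1 := Real.one_rpow _
  have hJ1 : ∫ x in (1:ℝ)..b, |fsp m b d x|
      = (-((2+c)/c)) * (b-1) + (2*(1+c)/c) * ((b^(c/2+1) - 1)/(c/2+1)) := by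
    rw [integral_congr_ae (Filter.Eventually.of_forall habs1), integ1 c _ _ 1 b hc0.le, hone]
  have hJ2 : ∫ x in b..(t0 m b), |fsp m b d x|
      = (2+c)/c * (t0 m b - b) + (-(Dcoef m b)) * (((t0 m b)^(c/2+1) - b^(c/2+1))/(c/2+1)) := by
    rw [integral_congr_ae (Filter.Eventually.of_forall habs2), integ1 c _ _ b (t0 m b) hc0.le]
  have hJ3 : ∫ x in (t0 m b)..d, |fsp m b d x|
      = (-((2+c)/c)) * (d - t0 m b) + (Dcoef m b) * ((d^(c/2+1) - (t0 m b)^(c/2+1))/(c/2+1)) := by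
    rw [integral_congr_ae (Filter.Eventually.of_forall habs3), integ1 c _ _ (t0 m b) d hc0.le]
  -- main equality
  have hbp : b ^ (c/2+1) = b ^ (c/2) * b := by rw [Real.rpow_add hb0, Real.rpow_one]
  have ht0p : (t0 m b) ^ (c/2+1) = (t0 m b) ^ (c/2) * t0 m b := by
    rw [Real.rpow_add ht0pos, Real.rpow_one]
  have hdp : d ^ (c/2+1) = d ^ (c/2) * d := by rw [Real.rpow_add hd0, Real.rpow_one]
  have hdp' : d ^ (1+c/2) = d * d ^ (c/2) := by rw [Real.rpow_add hd0, Real.rpow_one]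
  have hmain : denom m b d = ∫ t in Set.Ici (0:ℝ), |fsp m b d t| := by
    rw [hIci, hJ1, hJ2, hJ3, hbp, ht0p, hdp, hTY, hDY]
    simp only [denom, ← hcdef]
    rw [hdp', hbY, hBY]
    have h2 : (c:ℝ)/2 + 1 ≠ 0 := by positivity
    have h2c : (2:ℝ) + c ≠ 0 := by linarith
    have hY' : b ^ (c/2) ≠ 0 := ne_of_gt hY
    generalize b ^ (c/2) = Y at hY' h2Y ⊢
    generalize d ^ (c/2) = X
    generalize t0 m b = s
    field_simp
    ring
  refine ⟨?_, hmain⟩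
  -- positivity
  have hJ1ge : b - 1 ≤ ∫ x in (1:ℝ)..b, |fsp m b d x| := by
    have hpt : ∀ x ∈ Set.Icc (1:ℝ) b, (1:ℝ) ≤ (-((2+c)/c)) + (2*(1+c)/c) * x ^ (c/2) := by
      intro x hx
      have hX1 : (1:ℝ) ≤ x ^ (c/2) := Real.one_le_rpow hx.1 (by positivity)
      have hmono : 2*(1+c)/c * 1 ≤ 2*(1+c)/c * x ^ (c/2) := mul_le_mul_of_nonneg_left hX1 hk.le
      have he : (-((2+c)/c)) + 2*(1+c)/c = 1 := by field_simp; ring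
      linarith
    calc b - 1 = ∫ _x in (1:ℝ)..b, (1:ℝ) := by simp
      _ ≤ ∫ x in (1:ℝ)..b, ((-((2+c)/c)) + (2*(1+c)/c) * x ^ (c/2)) :=
          intervalIntegral.integral_mono_on hb.le intervalIntegrable_const
            (II_lin c _ _ 1 b hc0.le) hpt
      _ = ∫ x in (1:ℝ)..b, |fsp m b d x| :=
          (integral_congr_ae (Filter.Eventually.of_forall habs1)).symm
  have hJ2ge : 0 ≤ ∫ x in b..(t0 m b), |fsp m b d x| :=
    intervalIntegral.integral_nonneg hbt0.le (fun u _ => abs_nonneg _)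
  have hJ3ge : 0 ≤ ∫ x in (t0 m b)..d, |fsp m b d x| :=
    intervalIntegral.integral_nonneg ht0d.le (fun u _ => abs_nonneg _)
  rw [hmain, hIci]
  linarith

end Stmt4Aux

/-- For `(b,d) ∈ S_m` the denominator of `W(b,d,m)` is positive and equals the `L¹`-norm of
`f_{b,d,m}`, the measure of `{|Λ_m f_{b,d,m}| ≥ 1}` is at least `d - 1`, and consequently it is
at least `W(b,d,m)` times the `L¹`-norm of `f_{b,d,m}`. -/
theorem stmt_4 (m : ℕ) (hm : 1 ≤ m) (b d : ℝ) (h : (b, d) ∈ Sset m) :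
    0 < denom m b d ∧
    denom m b d = ∫ t in Set.Ici (0 : ℝ), |fsp m b d t| ∧
    ENNReal.ofReal (d - 1) ≤
      MeasureTheory.volume {t : ℝ | 0 ≤ t ∧ 1 ≤ |Lam m (fsp m b d) t|} ∧
    ENNReal.ofReal (Wf m b d * ∫ t in Set.Ici (0 : ℝ), |fsp m b d t|) ≤
      MeasureTheory.volume {t : ℝ | 0 ≤ t ∧ 1 ≤ |Lam m (fsp m b d) t|} := by
  obtain ⟨hb, hbd, hD, hfb, hfd0, hfd2⟩ := h
  obtain ⟨hpos, heq⟩ := denom_eq hm hb hbd hD hfb hfd0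
  have hmeas : ENNReal.ofReal (d - 1) ≤
      MeasureTheory.volume {t : ℝ | 0 ≤ t ∧ 1 ≤ |Lam m (fsp m b d) t|} := by
    have hsub : Set.Ioo (1:ℝ) d ⊆ {t : ℝ | 0 ≤ t ∧ 1 ≤ |Lam m (fsp m b d) t|} := by
      intro t ht
      refine ⟨by linarith [ht.1], ?_⟩
      rcases le_or_gt t b with h' | h'
      · rw [lam_one hm hb ht.1 h']; norm_num
      · rw [lam_neg hm hb hbd h' ht.2.le]; norm_num
    calc ENNReal.ofReal (d - 1) = MeasureTheory.volume (Set.Ioo (1:ℝ) d) :=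
          (Real.volume_Ioo).symm
      _ ≤ _ := measure_mono hsub
  refine ⟨hpos, heq, hmeas, ?_⟩
  rw [← heq, Wf, div_mul_cancel₀ _ (ne_of_gt hpos)]
  exact hmeas
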